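/- Fix 0 < p < 1, strictly increasing sequences of positive integers (m_k), (n_k), let Λ̃ = ⋃_k (2^{-m_k}ℕ ∩ [n_k, n_{k+1})), and let Λ be a random subset of Λ̃ where each point is kept independently with probability p; set q = 1 - p. If ∑_{k=1}^∞ (1 - (1 - q^{2^{m_k}})^{n_{k+1} - n_k}) = ∞, then almost surely there exist infinitely many k and integers a with [a, a+1) ⊆ [n_k, n_{k+1}) and [a, a+1) ∩ Λ = ∅; in particular Λ is almost surely asymptotically lacunary. -/

import Mathlib

open MeasureTheory Filter ProbabilityTheory
open scoped ENNReal

/-- `Λ̃ = ⋃_k (2^{-m_k}ℕ ∩ [n_k, n_{k+1}))`. -/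
def tildeLambda (m n : ℕ → ℕ) : Set ℝ :=
  ⋃ k : ℕ, {x : ℝ | (∃ j : ℕ, x = (j : ℝ) / 2 ^ m k) ∧
    (n k : ℝ) ≤ x ∧ x < (n (k+1) : ℝ)}

namespace RandomDeletionAux

variable (m n : ℕ → ℕ)

lemma block_eq (hn : StrictMono n) {k k' c : ℕ}
    (h1 : n k ≤ c) (h2 : c < n (k+1)) (h1' : n k' ≤ c) (h2' : c < n (k'+1)) :
    k = k' := by
  by_contra hne
  rcases Nat.lt_or_ge k k' with h | h
  · have : n (k+1) ≤ n k' := hn.monotone h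
    omega
  · have h' : k' < k := lt_of_le_of_ne h (Ne.symm hne)
    have : n (k'+1) ≤ n k := hn.monotone h'
    omega

lemma mem_tilde {k a : ℕ} (j : ℕ) (ha : n k + a + 1 ≤ n (k+1))
    (hj : j ∈ Finset.Ico (2 ^ m k * (n k + a)) (2 ^ m k * (n k + a + 1))) :
    ((j : ℝ) / 2 ^ m k) ∈ tildeLambda m n := by
  obtain ⟨hj1, hj2⟩ := Finset.mem_Ico.mp hj
  have h2 : (0:ℝ) < 2 ^ m k := by positivity
  refine Set.mem_iUnion.2 ⟨k, ⟨⟨j, rfl⟩, ?_, ?_⟩⟩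
  · rw [le_div_iff₀ h2]
    have h1 : ((2 ^ m k * (n k + a) : ℕ) : ℝ) ≤ (j : ℝ) := Nat.cast_le.2 hj1
    push_cast at h1
    nlinarith [Nat.cast_nonneg (α := ℝ) a]
  · rw [div_lt_iff₀ h2]
    have h1 : (j : ℝ) < ((2 ^ m k * (n k + a + 1) : ℕ) : ℝ) := Nat.cast_lt.2 hj2
    have h3 : ((n k + a + 1 : ℕ) : ℝ) ≤ (n (k+1) : ℝ) := Nat.cast_le.2 ha
    push_cast at h1 h3
    nlinarith

noncomputable def J (k a : ℕ) : Finset ↥(tildeLambda m n) :=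
  if ha : n k + a + 1 ≤ n (k+1) then
    (Finset.Ico (2 ^ m k * (n k + a)) (2 ^ m k * (n k + a + 1))).attach.image
      (fun j => ⟨(j.1 : ℝ) / 2 ^ m k, mem_tilde m n j.1 ha j.2⟩)
  else ∅

lemma mem_J_iff {k a : ℕ} (ha : n k + a + 1 ≤ n (k+1)) (x : ↥(tildeLambda m n)) :
    x ∈ J m n k a ↔ ∃ j ∈ Finset.Ico (2 ^ m k * (n k + a)) (2 ^ m k * (n k + a + 1)),
      (x : ℝ) = (j : ℝ) / 2 ^ m k := by
  rw [J, dif_pos ha]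
  simp only [Finset.mem_image, Finset.mem_attach, true_and]
  constructor
  · rintro ⟨⟨j, hj⟩, h⟩
    exact ⟨j, hj, by rw [← h]⟩
  · rintro ⟨j, hj, h⟩
    exact ⟨⟨j, hj⟩, Subtype.ext h.symm⟩

lemma card_J {k a : ℕ} (ha : n k + a + 1 ≤ n (k+1)) : (J m n k a).card = 2 ^ m k := by
  have h2 : (0:ℝ) < 2 ^ m k := by positivity
  rw [J, dif_pos ha, Finset.card_image_of_injective, Finset.card_attach, Nat.card_Ico]
  · rw [Nat.mul_add]
    omega
  · rintro ⟨j1, hj1⟩ ⟨j2, hj2⟩ h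
    simp only [Subtype.mk.injEq] at h
    have : (j1 : ℝ) = j2 := by
      field_simp at h
      exact_mod_cast h
    exact Subtype.ext (Nat.cast_injective this)

lemma J_bounds {k a : ℕ} (ha : n k + a + 1 ≤ n (k+1)) {x : ↥(tildeLambda m n)}
    (hx : x ∈ J m n k a) :
    ((n k + a : ℕ) : ℝ) ≤ (x : ℝ) ∧ (x : ℝ) < ((n k + a : ℕ) : ℝ) + 1 := by
  obtain ⟨j, hj, hxj⟩ := (mem_J_iff m n ha x).1 hx
  obtain ⟨hj1, hj2⟩ := Finset.mem_Ico.mp hj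
  have h2 : (0:ℝ) < 2 ^ m k := by positivity
  have h1 : ((2 ^ m k * (n k + a) : ℕ) : ℝ) ≤ (j : ℝ) := Nat.cast_le.2 hj1
  have h1' : (j : ℝ) < ((2 ^ m k * (n k + a + 1) : ℕ) : ℝ) := Nat.cast_lt.2 hj2
  push_cast at h1 h1'
  rw [hxj]
  constructor
  · rw [le_div_iff₀ h2]; push_cast; nlinarith
  · rw [div_lt_iff₀ h2]; push_cast; nlinarith

lemma mem_J_of (hn : StrictMono n) {k a : ℕ} (ha : n k + a + 1 ≤ n (k+1))
    (x : ↥(tildeLambda m n)) (h1 : ((n k + a : ℕ) : ℝ) ≤ (x : ℝ))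
    (h2 : (x : ℝ) < ((n k + a : ℕ) : ℝ) + 1) :
    x ∈ J m n k a := by
  obtain ⟨x, hx⟩ := x
  obtain ⟨k', hk'⟩ := Set.mem_iUnion.1 hx
  obtain ⟨⟨j, rfl⟩, hb1, hb2⟩ := hk'
  have h1' : ((n k + a : ℕ) : ℝ) ≤ (j : ℝ) / 2 ^ m k' := h1
  have h2' : (j : ℝ) / 2 ^ m k' < ((n k + a : ℕ) : ℝ) + 1 := h2
  have hxk1 : (n k : ℝ) ≤ (j : ℝ) / 2 ^ m k' := by
    have := Nat.cast_nonneg (α := ℝ) a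
    push_cast at h1' ⊢
    linarith
  have hxk2 : (j : ℝ) / 2 ^ m k' < (n (k+1) : ℝ) := by
    have hcast' : ((n k + a + 1 : ℕ) : ℝ) ≤ (n (k+1) : ℝ) := Nat.cast_le.2 ha
    push_cast at h2' hcast' ⊢
    linarith
  have hkk : k' = k := by
    by_contra hne
    rcases Nat.lt_or_ge k' k with h | h
    · have h3 : ((n (k'+1)) : ℝ) ≤ (n k : ℝ) := Nat.cast_le.2 (hn.monotone h)
      linarith
    · have h3 : ((n (k+1)) : ℝ) ≤ (n k' : ℝ) :=
        Nat.cast_le.2 (hn.monotone (lt_of_le_of_ne h (Ne.symm hne)))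
      linarith
  subst hkk
  have h2p : (0:ℝ) < 2 ^ m k' := by positivity
  rw [mem_J_iff m n ha]
  refine ⟨j, Finset.mem_Ico.2 ⟨?_, ?_⟩, rfl⟩
  · have h4 : ((n k' + a : ℕ) : ℝ) * 2 ^ m k' ≤ j := (le_div_iff₀ h2p).1 h1'
    have h5 : ((2 ^ m k' * (n k' + a) : ℕ) : ℝ) ≤ (j : ℝ) := by push_cast at h4 ⊢; nlinarith
    exact_mod_cast h5
  · have h4 : (j : ℝ) < (((n k' + a : ℕ) : ℝ) + 1) * 2 ^ m k' := (div_lt_iff₀ h2p).1 h2'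
    have h5 : (j : ℝ) < ((2 ^ m k' * (n k' + a + 1) : ℕ) : ℝ) := by push_cast at h4 ⊢; nlinarith
    exact_mod_cast h5

lemma J_disjoint (hn : StrictMono n) {k a k' a' : ℕ} (hne : (k, a) ≠ (k', a')) :
    Disjoint (J m n k a) (J m n k' a') := by
  rw [Finset.disjoint_left]
  intro x hx hx'
  by_cases ha : n k + a + 1 ≤ n (k+1)
  swap
  · rw [J, dif_neg ha] at hx; exact absurd hx (Finset.notMem_empty x)
  by_cases ha' : n k' + a' + 1 ≤ n (k'+1)
  swap
  · rw [J, dif_neg ha'] at hx'; exact absurd hx' (Finset.notMem_empty x)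
  obtain ⟨hb1, hb2⟩ := J_bounds m n ha hx
  obtain ⟨hb1', hb2'⟩ := J_bounds m n ha' hx'
  have hcne : n k + a ≠ n k' + a' := by
    intro hceq
    apply hne
    have hkk : k = k' := block_eq n hn (c := n k + a) (Nat.le_add_right _ _) (by omega)
      (by omega) (by omega)
    subst hkk
    have : a = a' := by omega
    subst this
    rfl
  rcases Nat.lt_or_ge (n k + a) (n k' + a') with h | h
  · have : ((n k + a : ℕ) : ℝ) + 1 ≤ ((n k' + a' : ℕ) : ℝ) := by exact_mod_cast h
    linarith
  · have h' : n k' + a' < n k + a := lt_of_le_of_ne h (Ne.symm hcne)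
    have : ((n k' + a' : ℕ) : ℝ) + 1 ≤ ((n k + a : ℕ) : ℝ) := by exact_mod_cast h'
    linarith

end RandomDeletionAux

/-- Random deletion: each point of `Λ̃` is kept independently with probability `p`.
If `∑_k (1 - (1 - q^{2^{m_k}})^{n_{k+1}-n_k}) = ∞` (with `q = 1-p`), then almost
surely infinitely many blocks `[n_k, n_{k+1})` contain a fully deleted unit
interval `[a, a+1)`; in particular the random set is a.s. asymptotically lacunary. -/
theorem random_deletion_type_two
    {Ω : Type*} [MeasurableSpace Ω] (P : Measure Ω) [IsProbabilityMeasure P]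
    (p q : ℝ) (hp : 0 < p) (hp1 : p < 1) (hq : q = 1 - p)
    (m n : ℕ → ℕ) (hm : StrictMono m) (hn : StrictMono n)
    (hm0 : 0 < m 0) (hn0 : 0 < n 0)
    (X : ↥(tildeLambda m n) → Ω → Bool) (hXm : ∀ i, Measurable (X i))
    (hindep : iIndepFun X P)
    (hX : ∀ i, P {ω | X i ω = true} = ENNReal.ofReal p)
    (Lam : Ω → Set ℝ)
    (hLam : ∀ ω, Lam ω = {x : ℝ | ∃ h : x ∈ tildeLambda m n, X ⟨x, h⟩ ω = true})
    (hdiv : ¬ Summable fun k : ℕ =>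
      1 - (1 - q ^ (2 ^ m k)) ^ (n (k+1) - n k)) :
    ∀ᵐ ω ∂P,
      (∀ K : ℕ, ∃ k ≥ K, ∃ a : ℕ, n k ≤ a ∧ a + 1 ≤ n (k+1) ∧
        ∀ x ∈ Lam ω, x ∉ Set.Ico (a : ℝ) ((a : ℝ) + 1)) ∧
      ∃ a : ℝ, 0 < a ∧ ∀ N : ℝ, ∃ x ≥ N, ∀ y ∈ Set.Icc x (x + a), y ∉ Lam ω := by
  classical
  have hq0 : 0 < q := by rw [hq]; linarith
  have hq1 : q < 1 := by rw [hq]; linarith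
  set c : ℝ≥0∞ := ENNReal.ofReal q with hc
  set S0 : ↥(tildeLambda m n) → Set Ω := fun i => X i ⁻¹' {false} with hS0
  have hS0meas : ∀ i, MeasurableSet (S0 i) := fun i => hXm i (measurableSet_singleton false)
  have hS0measure : ∀ i, P (S0 i) = c := by
    intro i
    have h1 : S0 i = {ω | X i ω = true}ᶜ := by
      ext ω; simp [hS0]
    have h2 : MeasurableSet {ω | X i ω = true} := hXm i (measurableSet_singleton true)
    rw [h1, prob_compl_eq_one_sub h2, hX i, hc, hq,
      ENNReal.ofReal_sub 1 hp.le, ENNReal.ofReal_one]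
  have hInter : ∀ T : Finset ↥(tildeLambda m n), P (⋂ i ∈ T, S0 i) = c ^ T.card := by
    intro T
    have h1 := hindep.measure_inter_preimage_eq_mul T
      (sets := fun _ => {false}) (fun i _ => measurableSet_singleton false)
    rw [hS0]
    rw [h1, Finset.prod_congr rfl (fun i _ => hS0measure i), Finset.prod_const]
  set B : ℕ × ℕ → Set Ω := fun kp => if n kp.1 + kp.2 + 1 ≤ n (kp.1+1)
    then ⋂ i ∈ RandomDeletionAux.J m n kp.1 kp.2, S0 i else ∅ with hB
  have hBmeas : ∀ kp, MeasurableSet (B kp) := by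
    intro kp
    rw [hB]
    dsimp only
    split
    · exact Finset.measurableSet_biInter _ (fun i _ => hS0meas i)
    · exact MeasurableSet.empty
  have hBval : ∀ k a, n k + a + 1 ≤ n (k+1) → P (B (k, a)) = c ^ (2 ^ m k) := by
    intro k a ha
    rw [hB]
    dsimp only
    rw [if_pos ha, hInter, RandomDeletionAux.card_J m n ha]
  set e : ℕ ≃ ℕ × ℕ := (Denumerable.eqv (ℕ × ℕ)).symm with he
  have hiIndep : iIndepSet (fun i => B (e i)) P := by
    rw [iIndepSet_iff_meas_biInter (fun i => hBmeas (e i))]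
    intro S
    by_cases hval : ∀ i ∈ S, n (e i).1 + (e i).2 + 1 ≤ n ((e i).1 + 1)
    · set Jf : ℕ → Finset ↥(tildeLambda m n) := fun i => RandomDeletionAux.J m n (e i).1 (e i).2 with hJf
      have hrw : ∀ i ∈ S, B (e i) = ⋂ j ∈ Jf i, S0 j := by
        intro i hi
        rw [hB]
        exact if_pos (hval i hi)
      have hJd : ∀ i1 ∈ S, ∀ i2 ∈ S, i1 ≠ i2 → Disjoint (Jf i1) (Jf i2) := by
        intro i1 _ i2 _ hne
        refine RandomDeletionAux.J_disjoint m n hn ?_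
        simp only [ne_eq, Prod.mk.injEq, not_and]
        intro h1 h2
        exact hne (e.injective (Prod.ext h1 h2))
      calc P (⋂ i ∈ S, B (e i)) = P (⋂ j ∈ S.biUnion Jf, S0 j) := by
            congr 1
            ext ω
            simp only [Set.mem_iInter]
            constructor
            · intro h j hj
              obtain ⟨i, hi, hji⟩ := Finset.mem_biUnion.1 hj
              have h2 := h i hi
              rw [hrw i hi] at h2
              exact Set.mem_iInter₂.1 h2 j hji
            · intro h i hi
              rw [hrw i hi]
              exact Set.mem_iInter₂.2 fun j hj => h j (Finset.mem_biUnion.2 ⟨i, hi, hj⟩)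
        _ = c ^ (S.biUnion Jf).card := hInter _
        _ = c ^ (∑ i ∈ S, (Jf i).card) := by rw [Finset.card_biUnion hJd]
        _ = ∏ i ∈ S, c ^ (Jf i).card := (Finset.prod_pow_eq_pow_sum S _ c).symm
        _ = ∏ i ∈ S, P (B (e i)) := by
            refine Finset.prod_congr rfl fun i hi => ?_
            rw [hrw i hi, hInter]
    · push_neg at hval
      obtain ⟨i0, hi0, hnv⟩ := hval
      have hB0 : B (e i0) = ∅ := by rw [hB]; exact if_neg (by omega)
      rw [Finset.prod_eq_zero hi0 (by rw [hB0]; exact measure_empty)]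
      exact measure_mono_null (Set.biInter_subset_of_mem hi0)
        (by rw [hB0]; exact measure_empty)
  have hfin : ∑' k : ℕ, ((n (k+1) - n k : ℕ) : ℝ≥0∞) * c ^ (2 ^ m k) = ∞ := by
    by_contra hne
    have hsummable := ENNReal.summable_toReal hne
    have heq : ∀ k : ℕ, ((((n (k+1) - n k : ℕ) : ℝ≥0∞)) * c ^ (2 ^ m k)).toReal
        = ((n (k+1) - n k : ℕ) : ℝ) * q ^ (2 ^ m k) := by
      intro k
      rw [ENNReal.toReal_mul, ENNReal.toReal_pow, hc, ENNReal.toReal_ofReal hq0.le,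
        ENNReal.toReal_natCast]
    simp only [heq] at hsummable
    apply hdiv
    refine Summable.of_nonneg_of_le (fun k => ?_) (fun k => ?_) hsummable
    · have hr0 : 0 ≤ q ^ (2 ^ m k) := by positivity
      have hr1 : q ^ (2 ^ m k) ≤ 1 := pow_le_one₀ hq0.le hq1.le
      have h5 : (1 - q ^ (2 ^ m k)) ^ (n (k+1) - n k) ≤ 1 :=
        pow_le_one₀ (by linarith) (by linarith)
      linarith
    · have hr0 : 0 ≤ q ^ (2 ^ m k) := by positivity
      have hr1 : q ^ (2 ^ m k) ≤ 1 := pow_le_one₀ hq0.le hq1.le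
      have h5 : (1:ℝ) - ((n (k+1) - n k : ℕ) : ℝ) * q ^ (2 ^ m k)
          ≤ (1 - q ^ (2 ^ m k)) ^ (n (k+1) - n k) := by
        rw [sub_eq_add_neg (1:ℝ) (q ^ (2 ^ m k))]
        have hber := one_add_mul_le_pow
          (by linarith : (-2:ℝ) ≤ -(q ^ (2 ^ m k))) (n (k+1) - n k)
        linarith
      linarith
  have hsum : ∑' i : ℕ, P (B (e i)) = ∞ := by
    rw [e.tsum_eq (fun kp => P (B kp)), ENNReal.tsum_prod']
    rw [eq_top_iff, ← hfin]
    refine le_trans (le_of_eq rfl) (ENNReal.tsum_le_tsum fun k => ?_)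
    have hle : ∑ a ∈ Finset.range (n (k+1) - n k), P (B (k, a))
        ≤ ∑' a : ℕ, P (B (k, a)) :=
      Summable.sum_le_tsum _ (fun a _ => zero_le) ENNReal.summable
    refine le_trans (le_of_eq ?_) hle
    have hnk : n k < n (k+1) := hn (Nat.lt_succ_self k)
    rw [Finset.sum_congr rfl (fun a ha => hBval k a (by
      have := Finset.mem_range.1 ha; omega))]
    rw [Finset.sum_const, Finset.card_range, nsmul_eq_mul]
  have hBC : P (limsup (fun i => B (e i)) atTop) = 1 :=
    measure_limsup_eq_one (fun i => hBmeas (e i)) hiIndep hsum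
  have hae : ∀ᵐ ω ∂P, ω ∈ limsup (fun i => B (e i)) atTop := by
    rw [ae_iff]
    have hms : MeasurableSet (limsup (fun i => B (e i)) atTop) :=
      MeasurableSet.measurableSet_limsup (fun i => hBmeas (e i))
    have h0 : P (limsup (fun i => B (e i)) atTop)ᶜ = 0 := by
      rw [prob_compl_eq_one_sub hms, hBC, tsub_self]
    exact h0
  filter_upwards [hae] with ω hω
  have hfreq : {i : ℕ | ω ∈ B (e i)}.Infinite :=
    Nat.frequently_atTop_iff_infinite.1 (Filter.mem_limsup_iff_frequently_mem.1 hω)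
  have hpairs : {kp : ℕ × ℕ | ω ∈ B kp}.Infinite := by
    have h1 := hfreq.image e.injective.injOn
    refine h1.mono ?_
    rintro kp ⟨i, hi, rfl⟩
    exact hi
  have hmain : ∀ K : ℕ, ∃ k ≥ K, ∃ a : ℕ, n k ≤ a ∧ a + 1 ≤ n (k+1) ∧
      ∀ x ∈ Lam ω, x ∉ Set.Ico (a : ℝ) ((a : ℝ) + 1) := by
    intro K
    have hnotsub : ¬ {kp : ℕ × ℕ | ω ∈ B kp} ⊆ Set.Iio K ×ˢ Set.Iio (n K) := by
      intro hsub
      exact hpairs (Set.Finite.subset ((Set.finite_Iio K).prod (Set.finite_Iio (n K))) hsub)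
    obtain ⟨⟨k, a⟩, hmem, hout⟩ := Set.not_subset.1 hnotsub
    have hmem' : ω ∈ B (k, a) := hmem
    have hval : n k + a + 1 ≤ n (k+1) := by
      by_contra hnv
      rw [hB] at hmem'
      dsimp only at hmem'
      rw [if_neg hnv] at hmem'
      exact hmem'
    have hkK : K ≤ k := by
      by_contra hk
      push_neg at hk
      apply hout
      have h2 : n (k+1) ≤ n K := hn.monotone hk
      exact ⟨hk, by simpa using by omega⟩
    refine ⟨k, hkK, n k + a, Nat.le_add_right _ _, hval, ?_⟩
    intro x hx hxI
    rw [hLam ω] at hx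
    obtain ⟨hxt, hXx⟩ := hx
    have hmemJ : (⟨x, hxt⟩ : ↥(tildeLambda m n)) ∈ RandomDeletionAux.J m n k a := by
      refine RandomDeletionAux.mem_J_of m n hn hval _ ?_ ?_
      · exact hxI.1
      · exact hxI.2
    have hInt : ω ∈ ⋂ j ∈ RandomDeletionAux.J m n k a, S0 j := by
      rw [hB] at hmem'
      dsimp only at hmem'
      rwa [if_pos hval] at hmem'
    have hfalse := Set.mem_iInter₂.1 hInt _ hmemJ
    rw [hS0] at hfalse
    simp only [Set.mem_preimage, Set.mem_singleton_iff] at hfalse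
    rw [hXx] at hfalse
    simp at hfalse
  refine ⟨hmain, 1/2, by norm_num, ?_⟩
  intro N
  obtain ⟨K, hK⟩ := exists_nat_ge N
  obtain ⟨k, hk, a, hna, han, hno⟩ := hmain K
  refine ⟨(a : ℝ), ?_, ?_⟩
  · have h1 : K ≤ a := le_trans hk (le_trans hn.le_apply hna)
    have h2 : (K : ℝ) ≤ (a : ℝ) := Nat.cast_le.2 h1
    linarith
  · intro y hy hyL
    exact hno y hyL ⟨hy.1, by
      have := hy.2
      linarith⟩
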